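/- Let J be a nonzero ideal of the polynomial ring K[x_1,...,x_k] over a field K of characteristic zero. Then there exists a finite system of generators f_1,...,f_l of J such that the ideal generated by f_1,...,f_{l-1}, x_1 f_l, x_2 f_l, ..., x_k f_l is strictly contained in J. -/

import Mathlib

private lemma range_snoc' {n : ℕ} {α : Type*} (g : Fin n → α) (x : α) :
    Set.range (Fin.snoc g x : Fin (n+1) → α) = insert x (Set.range g) := by
  ext y
  constructor
  · rintro ⟨i, rfl⟩
    refine Fin.lastCases ?_ ?_ i
    · simp
    · intro j; simp [Fin.snoc_castSucc]
  · rintro (rfl | ⟨i, rfl⟩)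
    · exact ⟨Fin.last n, Fin.snoc_last _ _⟩
    · exact ⟨i.castSucc, Fin.snoc_castSucc ..⟩

/-- For any nonzero ideal `J` of `K[x_1,...,x_k]`, there is a finite system of
generators `f_1, ..., f_l` of `J` such that the ideal generated by
`f_1, ..., f_{l-1}, x_1 f_l, ..., x_k f_l` is strictly contained in `J`. -/
theorem stmt0 (K : Type*) [Field K] [CharZero K] (k : ℕ)
    (J : Ideal (MvPolynomial (Fin k) K)) (hJ : J ≠ ⊥) :
    ∃ (l : ℕ) (f : Fin (l + 1) → MvPolynomial (Fin k) K),
      Ideal.span (Set.range f) = J ∧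
      Ideal.span ((Set.range fun i : Fin l => f i.castSucc) ∪
          (Set.range fun j : Fin k => MvPolynomial.X j * f (Fin.last l))) < J := by
  classical
  set R := MvPolynomial (Fin k) K with hRdef
  set m : Ideal R := Ideal.span (Set.range MvPolynomial.X) with hmdef
  have hJfg : J.FG := IsNoetherian.noetherian J
  have hmfg : m.FG := Submodule.fg_span (Set.finite_range _)
  have hmJle : m * J ≤ J := Ideal.mul_le_right
  have hP : ∃ n : ℕ, ∃ p : Fin n → R, (∀ i, p i ∈ J) ∧
      Ideal.span (Set.range p) ⊔ m * J = J := by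
    obtain ⟨s, hs⟩ := hJfg
    obtain ⟨n, p, -, hrange⟩ := Set.Finite.fin_param s.finite_toSet
    refine ⟨n, p, ?_, ?_⟩
    · intro i
      rw [← hs]
      exact Ideal.subset_span (hrange ▸ Set.mem_range_self i)
    · rw [hrange, hs]
      exact sup_eq_left.2 hmJle
  have hfind := Nat.find_spec hP
  have hn₀ne : Nat.find hP ≠ 0 := by
    intro h0
    rw [h0] at hfind
    obtain ⟨p, -, hpspan⟩ := hfind
    rw [Set.range_eq_empty p, Ideal.span_empty, bot_sup_eq] at hpspan
    obtain ⟨r, hrm, hr⟩ := Submodule.exists_mem_and_smul_eq_self_of_fg_of_le_smul m J hJfg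
      (by rw [Ideal.smul_eq_mul, hpspan])
    obtain ⟨y, hyJ, hy⟩ := Submodule.ne_bot_iff J |>.1 hJ
    have h1 : r = 1 := by
      have h2 := hr y hyJ
      rw [smul_eq_mul] at h2
      have h3 : (r - 1) * y = 0 := by linear_combination h2
      rcases mul_eq_zero.1 h3 with h | h
      · exact sub_eq_zero.1 h
      · exact absurd h hy
    have hker : m ≤ RingHom.ker (MvPolynomial.constantCoeff (R := K) (σ := Fin k)) := by
      rw [hmdef, Ideal.span_le]
      rintro x ⟨j, rfl⟩
      rw [SetLike.mem_coe, RingHom.mem_ker]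
      exact MvPolynomial.constantCoeff_X (R := K) j
    have := hker hrm
    rw [h1, RingHom.mem_ker, map_one] at this
    exact one_ne_zero this
  obtain ⟨t, ht⟩ := Nat.exists_eq_succ_of_ne_zero hn₀ne
  rw [ht] at hfind
  obtain ⟨p, hpJ, hpspan⟩ := hfind
  have hmin : ¬ ∃ p : Fin t → R, (∀ i, p i ∈ J) ∧
      Ideal.span (Set.range p) ⊔ m * J = J :=
    Nat.find_min hP (by omega)
  set N : Ideal R := Ideal.span (Set.range (p ∘ Fin.castSucc)) ⊔ m * J with hNdef
  have hNJ : N ≤ J := sup_le (Ideal.span_le.2 (by rintro x ⟨i, rfl⟩; exact hpJ _)) hmJle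
  have hNne : N ≠ J := fun h => hmin ⟨p ∘ Fin.castSucc, fun i => hpJ _, h⟩
  have hNfg : N.FG :=
    Submodule.FG.sup (Submodule.fg_span (Set.finite_range _)) (Submodule.FG.mul hmfg hJfg)
  obtain ⟨s, hs⟩ := hNfg
  obtain ⟨l, g, -, hg⟩ := Set.Finite.fin_param s.finite_toSet
  have hgN : Ideal.span (Set.range g) = N := by rw [hg, hs]
  refine ⟨l, Fin.snoc g (p (Fin.last t)), ?_, ?_⟩
  · rw [range_snoc', Ideal.span_insert, hgN, hNdef, ← sup_assoc, ← Ideal.span_insert]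
    have hsn : (Fin.snoc (p ∘ Fin.castSucc) (p (Fin.last t)) : Fin (t+1) → R) = p := by
      funext i
      refine Fin.lastCases ?_ ?_ i
      · simp
      · intro j; simp [Fin.snoc_castSucc]
    have hins : insert (p (Fin.last t)) (Set.range (p ∘ Fin.castSucc)) = Set.range p :=
      (range_snoc' _ _).symm.trans (congrArg Set.range hsn)
    rw [hins, hpspan]
  · have hfc : (fun i : Fin l => (Fin.snoc g (p (Fin.last t)) : Fin (l+1) → R) i.castSucc) = g := by
      funext i; exact Fin.snoc_castSucc ..
    have hfl : (Fin.snoc g (p (Fin.last t)) : Fin (l+1) → R) (Fin.last l) = p (Fin.last t) :=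
      Fin.snoc_last ..
    rw [hfc, hfl]
    have hIN : Ideal.span (Set.range g ∪ Set.range fun j : Fin k =>
        MvPolynomial.X j * p (Fin.last t)) ≤ N := by
      rw [Ideal.span_le]
      rintro x (⟨i, rfl⟩ | ⟨j, rfl⟩)
      · rw [← hgN]; exact Ideal.subset_span (Set.mem_range_self i)
      · exact (le_sup_right : m * J ≤ N)
          (Ideal.mul_mem_mul (Ideal.subset_span (Set.mem_range_self j)) (hpJ _))
    exact lt_of_le_of_lt hIN (lt_of_le_of_ne hNJ hNne)
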